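/- arXiv:2202.11895 — 2 statements merged into one kernel-verified Lean document; each statement's English description precedes it below -/
import Mathlib

section
/- Under the setup of the paper, the upper bound always satisfies τ̄(P) ≥ 0: with τ̄(P) = 4·E[min(F(X),G(Y)) | Z=1]·P(Z=1) + 4·E[F(X) | Z=2]·P(Z=2) + 4·E[G(Y) | Z=3]·P(Z=3) + 4·P(Z=4) − 1, one has τ̄(P) ≥ 0 whenever F(X) and G(Y) are uniformly distributed on [0,1]. -/
open MeasureTheory Set

lemma phi_integral_aux : ∫ t in Icc (0:ℝ) 1, min t (1/2) = 3/8 := by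
  rw [integral_Icc_eq_integral_Ioc, ← intervalIntegral.integral_of_le (by norm_num : (0:ℝ) ≤ 1)]
  have h1 : ∫ t in (0:ℝ)..(1/2), min t (1/2) = 1/8 := by
    have heq : EqOn (fun t : ℝ => min t (1/2)) (fun t => t) (uIcc (0:ℝ) (1/2)) := by
      intro t ht
      rw [uIcc_of_le (by norm_num : (0:ℝ) ≤ 1/2)] at ht
      exact min_eq_left ht.2
    rw [intervalIntegral.integral_congr heq]
    simp
    norm_num
  have h2 : ∫ t in (1/2:ℝ)..1, min t (1/2) = 1/4 := by
    have heq : EqOn (fun t : ℝ => min t (1/2)) (fun _ => (1/2:ℝ)) (uIcc (1/2:ℝ) 1) := by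
      intro t ht
      rw [uIcc_of_le (by norm_num : (1/2:ℝ) ≤ 1)] at ht
      exact min_eq_right ht.1
    rw [intervalIntegral.integral_congr heq]
    simp
    norm_num
  have hadd := intervalIntegral.integral_add_adjacent_intervals
    (a := (0:ℝ)) (b := 1/2) (c := 1) (f := fun t => min t (1/2)) (μ := volume)
    ((continuous_id.min continuous_const).intervalIntegrable _ _)
    ((continuous_id.min continuous_const).intervalIntegrable _ _)
  rw [← hadd, h1, h2]; norm_num

/-- The worst-case upper bound on Kendall's tau always satisfies τ̄(P) ≥ 0,
whenever F(X) and G(Y) are uniform on [0,1].  Conditional expectations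
E[·|Z=z]·P(Z=z) are written as set integrals over {Z=z}. -/
theorem upper_bound_nonneg {Ω : Type*} [MeasurableSpace Ω]
    (P : Measure Ω) [IsProbabilityMeasure P] (X Y : Ω → ℝ) (Z : Ω → ℕ)
    (hZrange : ∀ ω, Z ω ∈ Finset.Icc 1 4) (hZm : Measurable Z)
    (F G : ℝ → ℝ)
    (hFXm : Measurable (fun ω => F (X ω))) (hGYm : Measurable (fun ω => G (Y ω)))
    (hFX : Measure.map (fun ω => F (X ω)) P = volume.restrict (Icc (0:ℝ) 1))
    (hGY : Measure.map (fun ω => G (Y ω)) P = volume.restrict (Icc (0:ℝ) 1)) :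
    0 ≤ 4 * (∫ ω in {ω | Z ω = 1}, min (F (X ω)) (G (Y ω)) ∂P) +
        4 * (∫ ω in {ω | Z ω = 2}, F (X ω) ∂P) +
        4 * (∫ ω in {ω | Z ω = 3}, G (Y ω) ∂P) +
        4 * (P {ω | Z ω = 4}).toReal - 1 := by
  set U : Ω → ℝ := fun ω => F (X ω) with hUdef
  set V : Ω → ℝ := fun ω => G (Y ω) with hVdef
  -- integrability of U and V
  have hint : ∀ (W : Ω → ℝ), Measurable W →
      Measure.map W P = volume.restrict (Icc (0:ℝ) 1) → Integrable W P := by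
    intro W hWm hW
    have h1 : Integrable (id : ℝ → ℝ) (Measure.map W P) := by
      rw [hW]; exact continuous_id.integrableOn_Icc
    rwa [integrable_map_measure aestronglyMeasurable_id hWm.aemeasurable] at h1
  have hUint : Integrable U P := hint U hFXm hFX
  have hVint : Integrable V P := hint V hGYm hGY
  -- φ(t) = min t (1/2)
  have hφUint : Integrable (fun ω => min (U ω) (1/2)) P := hUint.inf (integrable_const _)
  have hφVint : Integrable (fun ω => min (V ω) (1/2)) P := hVint.inf (integrable_const _)
  -- values of the φ-integrals
  have hφval : ∀ (W : Ω → ℝ), Measurable W →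
      Measure.map W P = volume.restrict (Icc (0:ℝ) 1) →
      ∫ ω, min (W ω) (1/2) ∂P = 3/8 := by
    intro W hWm hW
    have : ∫ ω, min (W ω) (1/2) ∂P = ∫ t, min t (1/2) ∂(Measure.map W P) :=
      (integral_map hWm.aemeasurable
        (continuous_id.min continuous_const).aestronglyMeasurable).symm
    rw [this, hW]
    exact phi_integral_aux
  -- the minorant g
  set g : Ω → ℝ := fun ω => min (U ω) (1/2) + min (V ω) (1/2) - 1/2 with hgdef
  have hgint : Integrable g P := (hφUint.add hφVint).sub (integrable_const _)
  have haddint : Integrable (fun ω => min (U ω) (1/2) + min (V ω) (1/2)) P :=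
    hφUint.add hφVint
  have hgtot : ∫ ω, g ω ∂P = 1/4 := by
    rw [hgdef]
    rw [integral_sub haddint (integrable_const _),
        integral_add hφUint hφVint, hφval U hFXm hFX, hφval V hGYm hGY]
    simp
    norm_num
  -- pointwise bounds
  have hg_le_min : ∀ ω, g ω ≤ min (U ω) (V ω) := by
    intro ω
    rcases le_total (U ω) (V ω) with h | h
    · rw [min_eq_left h]
      have h1 := min_le_left (U ω) (1/2 : ℝ)
      have h2 := min_le_right (V ω) (1/2 : ℝ)
      simp only [hgdef]; linarith
    · rw [min_eq_right h]
      have h1 := min_le_right (U ω) (1/2 : ℝ)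
      have h2 := min_le_left (V ω) (1/2 : ℝ)
      simp only [hgdef]; linarith
  have hg_le_U : ∀ ω, g ω ≤ U ω := fun ω => (hg_le_min ω).trans (min_le_left _ _)
  have hg_le_V : ∀ ω, g ω ≤ V ω := fun ω => (hg_le_min ω).trans (min_le_right _ _)
  have hg_le_one : ∀ ω, g ω ≤ 1 := by
    intro ω
    have h1 := min_le_right (U ω) (1/2 : ℝ)
    have h2 := min_le_right (V ω) (1/2 : ℝ)
    simp only [hgdef]; linarith
  -- the four sets
  have hS : ∀ z : ℕ, MeasurableSet {ω | Z ω = z} := fun z => hZm (measurableSet_singleton z)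
  -- set integral bounds
  have hb1 : ∫ ω in {ω | Z ω = 1}, g ω ∂P ≤ ∫ ω in {ω | Z ω = 1}, min (U ω) (V ω) ∂P :=
    setIntegral_mono hgint.integrableOn ((hUint.inf hVint).integrableOn) hg_le_min
  have hb2 : ∫ ω in {ω | Z ω = 2}, g ω ∂P ≤ ∫ ω in {ω | Z ω = 2}, U ω ∂P :=
    setIntegral_mono hgint.integrableOn hUint.integrableOn hg_le_U
  have hb3 : ∫ ω in {ω | Z ω = 3}, g ω ∂P ≤ ∫ ω in {ω | Z ω = 3}, V ω ∂P :=
    setIntegral_mono hgint.integrableOn hVint.integrableOn hg_le_V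
  have hb4 : ∫ ω in {ω | Z ω = 4}, g ω ∂P ≤ (P {ω | Z ω = 4}).toReal := by
    have : ∫ ω in {ω | Z ω = 4}, g ω ∂P ≤ ∫ ω in {ω | Z ω = 4}, (1:ℝ) ∂P :=
      setIntegral_mono hgint.integrableOn (integrable_const _).integrableOn hg_le_one
    simpa [Measure.real] using this
  -- partition: sum of set integrals of g equals total integral
  have hdisj12 : Disjoint {ω | Z ω = 1} {ω | Z ω = 2} := by
    rw [Set.disjoint_left]; intro ω h1 h2; simp_all
  have hdisj3 : Disjoint ({ω | Z ω = 1} ∪ {ω | Z ω = 2}) {ω | Z ω = 3} := by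
    rw [Set.disjoint_left]; intro ω h1 h2
    simp only [mem_union, mem_setOf_eq] at h1 h2; omega
  have hdisj4 : Disjoint ({ω | Z ω = 1} ∪ {ω | Z ω = 2} ∪ {ω | Z ω = 3}) {ω | Z ω = 4} := by
    rw [Set.disjoint_left]; intro ω h1 h2
    simp only [mem_union, mem_setOf_eq] at h1 h2; omega
  have huniv : {ω | Z ω = 1} ∪ {ω | Z ω = 2} ∪ {ω | Z ω = 3} ∪ {ω | Z ω = 4} = univ := by
    ext ω
    have := hZrange ω
    simp only [Finset.mem_Icc] at this
    simp only [mem_union, mem_setOf_eq, mem_univ, iff_true]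
    omega
  have hsum : ∫ ω in {ω | Z ω = 1}, g ω ∂P + ∫ ω in {ω | Z ω = 2}, g ω ∂P
      + ∫ ω in {ω | Z ω = 3}, g ω ∂P + ∫ ω in {ω | Z ω = 4}, g ω ∂P = 1/4 := by
    rw [← setIntegral_union hdisj12 (hS 2) hgint.integrableOn hgint.integrableOn,
        ← setIntegral_union hdisj3 (hS 3) hgint.integrableOn hgint.integrableOn,
        ← setIntegral_union hdisj4 (hS 4) hgint.integrableOn hgint.integrableOn,
        huniv, setIntegral_univ, hgtot]
  linarith [hb1, hb2, hb3, hb4, hsum]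
end

section
/- Let s : ℝ² → ℝ be a bounded measurable supermodular function and U uniform on [0,1]. For any random variables X, Y with continuous strictly increasing CDFs F and G, and any coupling of X and Y, one has E[s(X,Y)] ≥ E[s(F⁻¹(U), G⁻¹(1−U))], i.e., the countermonotonic coupling minimizes the expectation of a supermodular function over all couplings with fixed margins. -/
open MeasureTheory Set Filter

namespace SupermodAux
noncomputable section


/-- Second-order difference of a bivariate function. -/
def dd (s : ℝ → ℝ → ℝ) (a b c d : ℝ) : ℝ := s b d - s a d - s b c + s a c

lemma dd_nonneg {s : ℝ → ℝ → ℝ}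
    (hs : ∀ x₁ x₂ y₁ y₂ : ℝ, x₁ ≤ x₂ → y₁ ≤ y₂ → s x₁ y₂ + s x₂ y₁ ≤ s x₁ y₁ + s x₂ y₂)
    {a b c d : ℝ} (hab : a ≤ b) (hcd : c ≤ d) : 0 ≤ dd s a b c d := by
  have := hs a b c d hab hcd
  unfold dd; linarith

lemma dd_mono {s : ℝ → ℝ → ℝ}
    (hs : ∀ x₁ x₂ y₁ y₂ : ℝ, x₁ ≤ x₂ → y₁ ≤ y₂ → s x₁ y₂ + s x₂ y₁ ≤ s x₁ y₁ + s x₂ y₂)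
    {a b c d a' b' c' d' : ℝ} (h1 : a' ≤ a) (h2 : a ≤ b) (h3 : b ≤ b')
    (h4 : c' ≤ c) (h5 : c ≤ d) (h6 : d ≤ d') :
    dd s a b c d ≤ dd s a' b' c' d' := by
  have k1 := dd_nonneg hs h1 h5
  have k2 := dd_nonneg hs h3 h5
  have k3 := dd_nonneg hs (h1.trans (h2.trans h3)) h4
  have k4 := dd_nonneg hs (h1.trans (h2.trans h3)) h6
  unfold dd at *; linarith

lemma dd_sum_left (s : ℝ → ℝ → ℝ) (u : ℕ → ℝ) (c d : ℝ) (p : ℕ) :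
    ∑ i ∈ Finset.range p, dd s (u i) (u (i + 1)) c d = dd s (u 0) (u p) c d := by
  have h : ∀ i, dd s (u i) (u (i + 1)) c d
      = (fun i => s (u i) d - s (u i) c) (i + 1) - (fun i => s (u i) d - s (u i) c) i := by
    intro i; simp only [dd]; ring
  rw [Finset.sum_congr rfl (fun i _ => h i),
    Finset.sum_range_sub (fun i => s (u i) d - s (u i) c)]
  simp only [dd]; ring

lemma dd_sum_right (s : ℝ → ℝ → ℝ) (v : ℕ → ℝ) (a b : ℝ) (q : ℕ) :
    ∑ j ∈ Finset.range q, dd s a b (v j) (v (j + 1)) = dd s a b (v 0) (v q) := by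
  have h : ∀ j, dd s a b (v j) (v (j + 1))
      = (fun j => s b (v j) - s a (v j)) (j + 1) - (fun j => s b (v j) - s a (v j)) j := by
    intro j; simp only [dd]; ring
  rw [Finset.sum_congr rfl (fun j _ => h j),
    Finset.sum_range_sub (fun j => s b (v j) - s a (v j))]
  simp only [dd]; ring

/-- A `<`-threshold filter on a monotone grid is an initial segment. -/
lemma filter_eq_range {n : ℕ} {u : ℕ → ℝ} (hu : ∀ i j, i ≤ j → j ≤ n → u i ≤ u j) (x : ℝ) :
    (Finset.range n).filter (fun i => u i < x) =
      Finset.range (((Finset.range n).filter (fun i => u i < x)).card) := by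
  set S := (Finset.range n).filter (fun i => u i < x) with hS
  have hdc : ∀ i ∈ S, ∀ k, k ≤ i → k ∈ S := by
    intro i hi k hk
    simp only [hS, Finset.mem_filter, Finset.mem_range] at hi ⊢
    exact ⟨lt_of_le_of_lt hk hi.1, lt_of_le_of_lt (hu k i hk (le_of_lt hi.1)) hi.2⟩
  ext i
  simp only [Finset.mem_range]
  constructor
  · intro hi
    have : Finset.range (i + 1) ⊆ S := by
      intro k hk
      exact hdc i hi k (Nat.lt_succ_iff.mp (Finset.mem_range.mp hk))
    have := Finset.card_le_card this
    simpa using this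
  · intro hi
    by_contra hni
    have hsub : S ⊆ Finset.range i := by
      intro j hj
      rcases lt_or_ge j i with h | h
      · exact Finset.mem_range.mpr h
      · exact absurd (hdc j hj i h) hni
    have := Finset.card_le_card hsub
    simp at this
    omega



variable {F : ℝ → ℝ}

lemma invFun_spec (hFs : StrictMono F) (hsurj : Ioo (0:ℝ) 1 ⊆ range F)
    {t : ℝ} (ht : t ∈ Ioo (0:ℝ) 1) : F (Function.invFun F t) = t :=
  Function.invFun_eq (hsurj ht)

lemma lt_invFun_iff (hFs : StrictMono F) (hsurj : Ioo (0:ℝ) 1 ⊆ range F)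
    {t a : ℝ} (ht : t ∈ Ioo (0:ℝ) 1) : a < Function.invFun F t ↔ F a < t := by
  rw [← invFun_spec hFs hsurj ht, hFs.lt_iff_lt, invFun_spec hFs hsurj ht]

lemma invFun_le_iff (hFs : StrictMono F) (hsurj : Ioo (0:ℝ) 1 ⊆ range F)
    {t a : ℝ} (ht : t ∈ Ioo (0:ℝ) 1) : Function.invFun F t ≤ a ↔ t ≤ F a := by
  rw [← not_lt, lt_invFun_iff hFs hsurj ht, not_lt]

lemma measurable_invFun (hFs : StrictMono F) (hr : range F = Ioo (0:ℝ) 1) :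
    Measurable (Function.invFun F) := by
  have hsurj : Ioo (0:ℝ) 1 ⊆ range F := hr.symm.subset
  have hjunk : ∀ t : ℝ, t ∉ Ioo (0:ℝ) 1 → Function.invFun F t = Function.invFun F 2 := by
    intro t ht
    have h1 : ¬∃ x, F x = t := by
      rintro ⟨x, rfl⟩; exact ht (hr ▸ mem_range_self x)
    have h2 : ¬∃ x, F x = (2:ℝ) := by
      rintro ⟨x, hx⟩
      have : (2:ℝ) ∈ Ioo (0:ℝ) 1 := hr ▸ (hx ▸ mem_range_self x)
      simp at this
    rw [Function.invFun_neg h1, Function.invFun_neg h2]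
  apply measurable_of_Iio
  intro a
  by_cases hc : Function.invFun F 2 < a
  · have : Function.invFun F ⁻¹' (Iio a) = (Ioo 0 1 ∩ Iio (F a)) ∪ (Ioo (0:ℝ) 1)ᶜ := by
      ext t
      by_cases ht : t ∈ Ioo (0:ℝ) 1
      · simp only [mem_preimage, mem_Iio, mem_union, mem_inter_iff, mem_compl_iff, ht,
          not_true, or_false, true_and]
        constructor
        · intro h
          have := hFs h
          rwa [invFun_spec hFs hsurj ht] at this
        · intro h
          by_contra hna
          have : F a ≤ F (Function.invFun F t) := hFs.monotone (not_lt.mp hna)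
          rw [invFun_spec hFs hsurj ht] at this
          linarith
      · simp only [mem_preimage, mem_Iio, mem_union, mem_inter_iff, mem_compl_iff, ht,
          not_false_iff, or_true, iff_true, hjunk t ht]
        exact hc
    rw [this]
    exact ((measurableSet_Ioo.inter measurableSet_Iio).union measurableSet_Ioo.compl)
  · have : Function.invFun F ⁻¹' (Iio a) = Ioo 0 1 ∩ Iio (F a) := by
      ext t
      by_cases ht : t ∈ Ioo (0:ℝ) 1
      · simp only [mem_preimage, mem_Iio, mem_inter_iff, ht, true_and]
        constructor
        · intro h
          have := hFs h
          rwa [invFun_spec hFs hsurj ht] at this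
        · intro h
          by_contra hna
          have : F a ≤ F (Function.invFun F t) := hFs.monotone (not_lt.mp hna)
          rw [invFun_spec hFs hsurj ht] at this
          linarith
      · simp only [mem_preimage, mem_Iio, mem_inter_iff, ht, false_and, iff_false, not_lt,
          hjunk t ht]
        exact not_lt.mp hc
    rw [this]
    exact measurableSet_Ioo.inter measurableSet_Iio

/-- Range of a continuous strictly monotone CDF with values in `(0,1)` and full limits. -/
lemma range_cdf {ν : Measure ℝ} [IsProbabilityMeasure ν]
    (hFc : Continuous F) (hFs : StrictMono F) (hF : ∀ x, F x = (ν (Iic x)).toReal) :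
    range F = Ioo (0:ℝ) 1 := by
  have hle : ∀ x, 0 ≤ F x ∧ F x ≤ 1 := by
    intro x
    rw [hF x]
    exact ⟨ENNReal.toReal_nonneg, by
      have := prob_le_one (μ := ν) (s := Iic x)
      simpa using ENNReal.toReal_mono (by simp) this⟩
  have h01 : ∀ x, F x ∈ Ioo (0:ℝ) 1 := by
    intro x
    constructor
    · have := hFs (show x - 1 < x by linarith)
      linarith [(hle (x - 1)).1]
    · have := hFs (show x < x + 1 by linarith)
      linarith [(hle (x + 1)).2]
  apply Subset.antisymm
  · rintro t ⟨x, rfl⟩; exact h01 x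
  · intro t ht
    have htop : Tendsto F atTop (nhds 1) := by
      have h1 : Tendsto (fun x => ν (Iic x)) atTop (nhds (ν univ)) :=
        tendsto_measure_Iic_atTop ν
      have h2 := (ENNReal.tendsto_toReal (by simp : ν univ ≠ ⊤)).comp h1
      have h3 : Tendsto (fun x => (ν (Iic x)).toReal) atTop (nhds 1) := by
        rw [measure_univ, ENNReal.toReal_one] at h2
        exact h2
      exact h3.congr (fun x => (hF x).symm)
    have hbot : Tendsto F atBot (nhds 0) := by
      have h1 : Tendsto (fun x => ν (Ici x)) atBot (nhds (ν univ)) :=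
        tendsto_measure_Ici_atBot ν
      have h2 := (ENNReal.tendsto_toReal (by simp : ν univ ≠ ⊤)).comp h1
      have h3 : Tendsto (fun x : ℝ => (ν (Ici (x + 1))).toReal) atBot (nhds 1) := by
        have := (measure_univ (μ := ν)) ▸ h2
        exact (this.comp (tendsto_atBot_add_const_right _ 1 tendsto_id))
      have h4 : Tendsto (fun x : ℝ => 1 - (ν (Ici (x + 1))).toReal) atBot (nhds 0) := by
        have := (tendsto_const_nhds (x := (1:ℝ)) (f := atBot)).sub h3
        simpa using this
      apply tendsto_of_tendsto_of_tendsto_of_le_of_le (tendsto_const_nhds) h4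
      · intro x; exact (hle x).1
      · intro x
        have hdisj : Disjoint (Iic x) (Ici (x + 1)) := by
          apply Set.disjoint_left.mpr
          intro y hy hy'
          simp only [mem_Iic, mem_Ici] at hy hy'
          linarith
        have := measure_union hdisj measurableSet_Ici (μ := ν)
        have hle1 : ν (Iic x) + ν (Ici (x + 1)) ≤ 1 := by
          rw [← this]
          exact prob_le_one
        have h5 : (ν (Iic x)).toReal + (ν (Ici (x + 1))).toReal ≤ 1 := by
          rw [← ENNReal.toReal_add (measure_ne_top _ _) (measure_ne_top _ _)]
          have := ENNReal.toReal_mono (by simp) hle1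
          simpa using this
        show F x ≤ 1 - (ν (Ici (x + 1))).toReal
        rw [hF]
        linarith
    obtain ⟨b, hb⟩ := (htop.eventually (eventually_gt_nhds ht.2)).exists
    obtain ⟨a, ha⟩ := (hbot.eventually (eventually_lt_nhds ht.1)).exists
    have hab : a ≤ b := by
      by_contra h
      have := hFs (not_le.mp h)
      linarith
    have := intermediate_value_Icc hab hFc.continuousOn
    have hmem : t ∈ Icc (F a) (F b) := ⟨le_of_lt ha, le_of_lt hb⟩
    obtain ⟨x, _, hx⟩ := this hmem
    exact ⟨x, hx⟩


/-- number of grid points strictly below `x` -/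
def cnt (u : ℕ → ℝ) (n : ℕ) (x : ℝ) : ℕ :=
  ((Finset.range n).filter (fun i => u i < x)).card

lemma filter_eq_range' {n : ℕ} {u : ℕ → ℝ} (hu : ∀ i j, i ≤ j → j ≤ n → u i ≤ u j) (x : ℝ) :
    (Finset.range n).filter (fun i => u i < x) = Finset.range (cnt u n x) := by
  unfold cnt; exact filter_eq_range hu x

lemma cnt_le (u : ℕ → ℝ) (n : ℕ) (x : ℝ) : cnt u n x ≤ n := by
  unfold cnt
  calc ((Finset.range n).filter (fun i => u i < x)).card
      ≤ (Finset.range n).card := Finset.card_filter_le _ _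
    _ = n := Finset.card_range n

lemma cnt_lt_iff {n : ℕ} {u : ℕ → ℝ} (hu : ∀ i j, i ≤ j → j ≤ n → u i ≤ u j) (x : ℝ)
    {i : ℕ} (hi : i < n) : u i < x ↔ i < cnt u n x := by
  constructor
  · intro hx
    have h : i ∈ (Finset.range n).filter (fun i => u i < x) :=
      Finset.mem_filter.mpr ⟨Finset.mem_range.mpr hi, hx⟩
    rw [filter_eq_range' hu x] at h
    exact Finset.mem_range.mp h
  · intro hx
    have h : i ∈ Finset.range (cnt u n x) := Finset.mem_range.mpr hx
    rw [← filter_eq_range' hu x] at h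
    exact (Finset.mem_filter.mp h).2

lemma cnt_ub {n : ℕ} {u : ℕ → ℝ} (hu : ∀ i j, i ≤ j → j ≤ n → u i ≤ u j) {x : ℝ}
    (hx : x ≤ u n) : x ≤ u (cnt u n x) := by
  rcases eq_or_lt_of_le (cnt_le u n x) with h | h
  · rw [h]; exact hx
  · by_contra hc
    push_neg at hc
    exact absurd ((cnt_lt_iff hu x h).mp hc) (lt_irrefl _)

def m1 (s : ℝ → ℝ → ℝ) (u v : ℕ → ℝ) (n : ℕ) (x : ℝ) : ℝ :=
  s (u (cnt u n x)) (v 0) + s x (v n) - s (u (cnt u n x)) (v n)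

def m2 (s : ℝ → ℝ → ℝ) (u v : ℕ → ℝ) (n : ℕ) (y : ℝ) : ℝ := s (u 0) y

def DD (s : ℝ → ℝ → ℝ) (u v : ℕ → ℝ) (n : ℕ) (x y : ℝ) : ℝ :=
  ∑ i ∈ Finset.range n, ∑ j ∈ Finset.range n,
    (if u i < x then (1:ℝ) else 0) * (if v j < y then (1:ℝ) else 0) *
      dd s (u i) (u (i+1)) (v j) (v (j+1))

def psi (s : ℝ → ℝ → ℝ) (u v : ℕ → ℝ) (n : ℕ) (x y : ℝ) : ℝ :=
  m1 s u v n x + m2 s u v n y - s (u 0) (v 0) + DD s u v n x y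

def e1 (s : ℝ → ℝ → ℝ) (u v : ℕ → ℝ) (n : ℕ) (x : ℝ) : ℝ :=
  ∑ i ∈ Finset.range n,
    if x ∈ Ioc (u i) (u (i+1)) then dd s (u i) (u (i+1)) (v 0) (v n) else 0

def e2 (s : ℝ → ℝ → ℝ) (u v : ℕ → ℝ) (n : ℕ) (y : ℝ) : ℝ :=
  ∑ j ∈ Finset.range n,
    if y ∈ Ioc (v j) (v (j+1)) then dd s (u 0) (u n) (v j) (v (j+1)) else 0

def tl (u : ℕ → ℝ) (n : ℕ) (x : ℝ) : ℝ := if x ∈ Ioc (u 0) (u n) then 0 else 1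

lemma tl_nonneg (u : ℕ → ℝ) (n : ℕ) (x : ℝ) : 0 ≤ tl u n x := by
  unfold tl; split <;> norm_num

lemma DD_eq {n : ℕ} {u v : ℕ → ℝ} (hu : ∀ i j, i ≤ j → j ≤ n → u i ≤ u j)
    (hv : ∀ i j, i ≤ j → j ≤ n → v i ≤ v j) (s : ℝ → ℝ → ℝ) (x y : ℝ) :
    DD s u v n x y = dd s (u 0) (u (cnt u n x)) (v 0) (v (cnt v n y)) := by
  unfold DD
  have inner : ∀ a b : ℝ,
      ∑ j ∈ Finset.range n, (if v j < y then (1:ℝ) else 0) * dd s a b (v j) (v (j+1))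
        = dd s a b (v 0) (v (cnt v n y)) := by
    intro a b
    have h : ∀ j, (if v j < y then (1:ℝ) else 0) * dd s a b (v j) (v (j+1))
        = if v j < y then dd s a b (v j) (v (j+1)) else 0 := by
      intro j; split <;> simp
    rw [Finset.sum_congr rfl (fun j _ => h j), ← Finset.sum_filter, filter_eq_range' hv,
      dd_sum_right]
  have houter : ∀ i, (∑ j ∈ Finset.range n,
      (if u i < x then (1:ℝ) else 0) * (if v j < y then (1:ℝ) else 0) *
        dd s (u i) (u (i+1)) (v j) (v (j+1)))
      = if u i < x then dd s (u i) (u (i+1)) (v 0) (v (cnt v n y)) else 0 := by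
    intro i
    have h : ∀ j, (if u i < x then (1:ℝ) else 0) * (if v j < y then (1:ℝ) else 0) *
        dd s (u i) (u (i+1)) (v j) (v (j+1))
        = (if u i < x then (1:ℝ) else 0) *
            ((if v j < y then (1:ℝ) else 0) * dd s (u i) (u (i+1)) (v j) (v (j+1))) := by
      intro j; ring
    rw [Finset.sum_congr rfl (fun j _ => h j), ← Finset.mul_sum, inner]
    split <;> simp
  rw [Finset.sum_congr rfl (fun i _ => houter i), ← Finset.sum_filter, filter_eq_range' hu,
    dd_sum_left]

lemma e1_nonneg {n : ℕ} {u v : ℕ → ℝ} {s : ℝ → ℝ → ℝ}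
    (hs : ∀ x₁ x₂ y₁ y₂ : ℝ, x₁ ≤ x₂ → y₁ ≤ y₂ → s x₁ y₂ + s x₂ y₁ ≤ s x₁ y₁ + s x₂ y₂)
    (hu : ∀ i j, i ≤ j → j ≤ n → u i ≤ u j) (hv : ∀ i j, i ≤ j → j ≤ n → v i ≤ v j)
    (x : ℝ) : 0 ≤ e1 s u v n x := by
  apply Finset.sum_nonneg
  intro i hi
  have hi' := Finset.mem_range.mp hi
  split
  · exact dd_nonneg hs (hu i (i+1) (by omega) (by omega)) (hv 0 n (by omega) le_rfl)
  · exact le_refl 0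

lemma e2_nonneg {n : ℕ} {u v : ℕ → ℝ} {s : ℝ → ℝ → ℝ}
    (hs : ∀ x₁ x₂ y₁ y₂ : ℝ, x₁ ≤ x₂ → y₁ ≤ y₂ → s x₁ y₂ + s x₂ y₁ ≤ s x₁ y₁ + s x₂ y₂)
    (hu : ∀ i j, i ≤ j → j ≤ n → u i ≤ u j) (hv : ∀ i j, i ≤ j → j ≤ n → v i ≤ v j)
    (y : ℝ) : 0 ≤ e2 s u v n y := by
  apply Finset.sum_nonneg
  intro j hj
  have hj' := Finset.mem_range.mp hj
  split
  · exact dd_nonneg hs (hu 0 n (by omega) le_rfl) (hv j (j+1) (by omega) (by omega))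
  · exact le_refl 0

lemma psi_eq {n : ℕ} {u v : ℕ → ℝ} (hu : ∀ i j, i ≤ j → j ≤ n → u i ≤ u j)
    (hv : ∀ i j, i ≤ j → j ≤ n → v i ≤ v j) (s : ℝ → ℝ → ℝ) (x y : ℝ) :
    psi s u v n x y =
      s (u (cnt u n x)) (v (cnt v n y))
      + (s x (v n) - s (u (cnt u n x)) (v n)) + (s (u 0) y - s (u 0) (v (cnt v n y))) := by
  unfold psi m1 m2
  rw [DD_eq hu hv]
  unfold dd; ring

lemma e1_good {n : ℕ} {u v : ℕ → ℝ} (s : ℝ → ℝ → ℝ)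
    (hu : ∀ i j, i ≤ j → j ≤ n → u i ≤ u j) {x : ℝ}
    (hp1 : 1 ≤ cnt u n x) (hup1 : u (cnt u n x - 1) < x) (hxu : x ≤ u (cnt u n x)) :
    e1 s u v n x = dd s (u (cnt u n x - 1)) (u (cnt u n x)) (v 0) (v n) := by
  have hpn := cnt_le u n x
  set p := cnt u n x with hp
  unfold e1
  rw [Finset.sum_eq_single (p-1)]
  · rw [if_pos]
    · congr 2 <;> omega
    · constructor
      · exact hup1
      · have : p - 1 + 1 = p := by omega
        rw [this]; exact hxu
  · intro i hi hne
    rw [if_neg]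
    rintro ⟨h1, h2⟩
    have hi' := Finset.mem_range.mp hi
    rcases lt_or_ge i (p-1) with hc | hc
    · have : u (i+1) ≤ u (p-1) := hu _ _ (by omega) (by omega)
      linarith
    · have : u p ≤ u i := hu _ _ (by omega) (by omega)
      linarith
  · intro h
    exact absurd (Finset.mem_range.mpr (by omega)) h

lemma e2_good {n : ℕ} {u v : ℕ → ℝ} (s : ℝ → ℝ → ℝ)
    (hv : ∀ i j, i ≤ j → j ≤ n → v i ≤ v j) {y : ℝ}
    (hq1 : 1 ≤ cnt v n y) (hvq1 : v (cnt v n y - 1) < y) (hyv : y ≤ v (cnt v n y)) :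
    e2 s u v n y = dd s (u 0) (u n) (v (cnt v n y - 1)) (v (cnt v n y)) := by
  have hqn := cnt_le v n y
  set q := cnt v n y with hq
  unfold e2
  rw [Finset.sum_eq_single (q-1)]
  · rw [if_pos]
    · congr 2 <;> omega
    · constructor
      · exact hvq1
      · have : q - 1 + 1 = q := by omega
        rw [this]; exact hyv
  · intro j hj hne
    rw [if_neg]
    rintro ⟨h1, h2⟩
    have hj' := Finset.mem_range.mp hj
    rcases lt_or_ge j (q-1) with hc | hc
    · have : v (j+1) ≤ v (q-1) := hv _ _ (by omega) (by omega)
      linarith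
    · have : v q ≤ v j := hv _ _ (by omega) (by omega)
      linarith
  · intro h
    exact absurd (Finset.mem_range.mpr (by omega)) h

lemma good_facts {n : ℕ} {w : ℕ → ℝ} (hw : ∀ i j, i ≤ j → j ≤ n → w i ≤ w j) {x : ℝ}
    (hx : x ∈ Ioc (w 0) (w n)) :
    1 ≤ cnt w n x ∧ w (cnt w n x - 1) < x ∧ x ≤ w (cnt w n x) ∧ 0 < n := by
  have hn : 0 < n := by
    rcases Nat.eq_zero_or_pos n with h | h
    · exfalso; rw [h] at hx; exact absurd hx.2 (not_le.mpr hx.1)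
    · exact h
  have hp1 : 1 ≤ cnt w n x := (cnt_lt_iff hw x hn).mp hx.1
  have hxu : x ≤ w (cnt w n x) := cnt_ub hw hx.2
  have hup1 : w (cnt w n x - 1) < x := by
    have := cnt_le w n x
    exact (cnt_lt_iff hw x (by omega)).mpr (by omega)
  exact ⟨hp1, hup1, hxu, hn⟩

lemma s_le_psi {n : ℕ} {u v : ℕ → ℝ} {s : ℝ → ℝ → ℝ} {M : ℝ}
    (hs : ∀ x₁ x₂ y₁ y₂ : ℝ, x₁ ≤ x₂ → y₁ ≤ y₂ → s x₁ y₂ + s x₂ y₁ ≤ s x₁ y₁ + s x₂ y₂)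
    (hM : ∀ x y, |s x y| ≤ M)
    (hu : ∀ i j, i ≤ j → j ≤ n → u i ≤ u j) (hv : ∀ i j, i ≤ j → j ≤ n → v i ≤ v j)
    (x y : ℝ) :
    s x y ≤ psi s u v n x y + e1 s u v n x + 8 * M * (tl u n x + tl v n y) := by
  have hM0 : 0 ≤ M := le_trans (abs_nonneg _) (hM 0 0)
  have hpn := cnt_le u n x
  have hqn := cnt_le v n y
  rw [psi_eq hu hv]
  by_cases hgood : x ∈ Ioc (u 0) (u n) ∧ y ∈ Ioc (v 0) (v n)
  · obtain ⟨hx, hy⟩ := hgood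
    obtain ⟨hp1, hup1, hxu, hn⟩ := good_facts hu hx
    obtain ⟨hq1, hvq1, hyv, -⟩ := good_facts hv hy
    have htlx : tl u n x = 0 := if_pos hx
    have htly : tl v n y = 0 := if_pos hy
    have he1 := e1_good (v := v) s hu hp1 hup1 hxu
    have key1b : dd s x (u (cnt u n x)) y (v n) ≤
        dd s (u (cnt u n x - 1)) (u (cnt u n x)) (v 0) (v n) :=
      dd_mono hs (le_of_lt hup1) hxu le_rfl (le_of_lt hy.1) hy.2 le_rfl
    have key2 : 0 ≤ dd s (u 0) (u (cnt u n x)) y (v (cnt v n y)) :=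
      dd_nonneg hs (hu 0 _ (by omega) hpn) hyv
    rw [htlx, htly, he1]
    unfold dd at key1b key2 ⊢
    linarith
  · have hsum : 1 ≤ tl u n x + tl v n y := by
      rcases not_and_or.mp hgood with h | h
      · have h1 : tl u n x = 1 := if_neg h
        have := tl_nonneg v n y
        linarith
      · have h1 : tl v n y = 1 := if_neg h
        have := tl_nonneg u n x
        linarith
    have h8 : 8 * M ≤ 8 * M * (tl u n x + tl v n y) := by
      calc 8 * M = 8 * M * 1 := by ring
      _ ≤ 8 * M * (tl u n x + tl v n y) :=
        mul_le_mul_of_nonneg_left hsum (by linarith)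
    have he1 := e1_nonneg hs hu hv x
    have b0 := abs_le.mp (hM x y)
    have b1 := abs_le.mp (hM (u (cnt u n x)) (v (cnt v n y)))
    have b2 := abs_le.mp (hM x (v n))
    have b3 := abs_le.mp (hM (u (cnt u n x)) (v n))
    have b4 := abs_le.mp (hM (u 0) y)
    have b5 := abs_le.mp (hM (u 0) (v (cnt v n y)))
    linarith

lemma s_ge_psi {n : ℕ} {u v : ℕ → ℝ} {s : ℝ → ℝ → ℝ} {M : ℝ}
    (hs : ∀ x₁ x₂ y₁ y₂ : ℝ, x₁ ≤ x₂ → y₁ ≤ y₂ → s x₁ y₂ + s x₂ y₁ ≤ s x₁ y₁ + s x₂ y₂)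
    (hM : ∀ x y, |s x y| ≤ M)
    (hu : ∀ i j, i ≤ j → j ≤ n → u i ≤ u j) (hv : ∀ i j, i ≤ j → j ≤ n → v i ≤ v j)
    (x y : ℝ) :
    psi s u v n x y - e2 s u v n y - 8 * M * (tl u n x + tl v n y) ≤ s x y := by
  have hM0 : 0 ≤ M := le_trans (abs_nonneg _) (hM 0 0)
  have hpn := cnt_le u n x
  have hqn := cnt_le v n y
  rw [psi_eq hu hv]
  by_cases hgood : x ∈ Ioc (u 0) (u n) ∧ y ∈ Ioc (v 0) (v n)
  · obtain ⟨hx, hy⟩ := hgood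
    obtain ⟨hp1, hup1, hxu, hn⟩ := good_facts hu hx
    obtain ⟨hq1, hvq1, hyv, -⟩ := good_facts hv hy
    have htlx : tl u n x = 0 := if_pos hx
    have htly : tl v n y = 0 := if_pos hy
    have he2 := e2_good (u := u) s hv hq1 hvq1 hyv
    have key1 : 0 ≤ dd s x (u (cnt u n x)) y (v n) := dd_nonneg hs hxu hy.2
    have key2b : dd s (u 0) (u (cnt u n x)) y (v (cnt v n y)) ≤
        dd s (u 0) (u n) (v (cnt v n y - 1)) (v (cnt v n y)) :=
      dd_mono hs le_rfl (hu 0 _ (by omega) hpn) (hu _ _ hpn le_rfl)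
        (le_of_lt hvq1) hyv le_rfl
    rw [htlx, htly, he2]
    unfold dd at key1 key2b ⊢
    linarith
  · have hsum : 1 ≤ tl u n x + tl v n y := by
      rcases not_and_or.mp hgood with h | h
      · have h1 : tl u n x = 1 := if_neg h
        have := tl_nonneg v n y
        linarith
      · have h1 : tl v n y = 1 := if_neg h
        have := tl_nonneg u n x
        linarith
    have h8 : 8 * M ≤ 8 * M * (tl u n x + tl v n y) := by
      calc 8 * M = 8 * M * 1 := by ring
      _ ≤ 8 * M * (tl u n x + tl v n y) :=
        mul_le_mul_of_nonneg_left hsum (by linarith)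
    have he2 := e2_nonneg hs hu hv y
    have b0 := abs_le.mp (hM x y)
    have b1 := abs_le.mp (hM (u (cnt u n x)) (v (cnt v n y)))
    have b2 := abs_le.mp (hM x (v n))
    have b3 := abs_le.mp (hM (u (cnt u n x)) (v n))
    have b4 := abs_le.mp (hM (u 0) y)
    have b5 := abs_le.mp (hM (u 0) (v (cnt v n y)))
    linarith

section MeasureHelpers

variable {Ω : Type*} [MeasurableSpace Ω] {m : Measure Ω}

lemma integrable_bdd [IsFiniteMeasure m] {f : Ω → ℝ} (hf : Measurable f) {C : ℝ}
    (h : ∀ ω, |f ω| ≤ C) : Integrable f m :=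
  ⟨hf.aestronglyMeasurable,
    HasFiniteIntegral.of_bounded (C := C) (ae_of_all _ (by simpa [Real.norm_eq_abs] using h))⟩

lemma prob_compl_toReal [IsProbabilityMeasure m] {A : Set Ω} (hA : MeasurableSet A) :
    (m Aᶜ).toReal = 1 - (m A).toReal := by
  rw [measure_compl hA (measure_ne_top m A), measure_univ,
    ENNReal.toReal_sub_of_le (prob_le_one) (by simp)]
  simp

lemma prob_inter_ge [IsProbabilityMeasure m] {A B : Set Ω}
    (hB : MeasurableSet B) :
    (m A).toReal + (m B).toReal - 1 ≤ (m (A ∩ B)).toReal := by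
  have key := measure_union_add_inter (μ := m) A hB
  have h1 : m (A ∪ B) + m (A ∩ B) ≤ 1 + m (A ∩ B) := by
    gcongr
    exact prob_le_one
  rw [key] at h1
  have h2 := ENNReal.toReal_mono (by simp [measure_ne_top]) h1
  rw [ENNReal.toReal_add (measure_ne_top _ _) (measure_ne_top _ _),
    ENNReal.toReal_add (by simp) (measure_ne_top _ _)] at h2
  simp at h2
  linarith

lemma prob_Ioc_toReal [IsProbabilityMeasure m] {A : Ω → ℝ} (hA : Measurable A) {a b : ℝ}
    (hab : a ≤ b) :
    (m {ω | A ω ∈ Ioc a b}).toReal = (m (A ⁻¹' Iic b)).toReal - (m (A ⁻¹' Iic a)).toReal := by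
  have hset : A ⁻¹' Iic a ∪ {ω | A ω ∈ Ioc a b} = A ⁻¹' Iic b := by
    have : A ⁻¹' Iic a ∪ A ⁻¹' Ioc a b = A ⁻¹' Iic b := by
      rw [← preimage_union, Iic_union_Ioc_eq_Iic hab]
    exact this
  have hdisj : Disjoint (A ⁻¹' Iic a) {ω | A ω ∈ Ioc a b} := by
    apply Set.disjoint_left.mpr
    intro ω h1 h2
    simp only [mem_preimage, mem_Iic] at h1
    exact absurd h1 (not_le.mpr h2.1)
  have hm := measure_union (μ := m) hdisj (hA measurableSet_Ioc)
  rw [hset] at hm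
  rw [hm, ENNReal.toReal_add (measure_ne_top _ _) (measure_ne_top _ _)]
  ring

end MeasureHelpers

section Uniform

variable {Ω' : Type*} [MeasurableSpace Ω'] {Q : Measure Ω'} [IsProbabilityMeasure Q]
  {U : Ω' → ℝ}

lemma unif_ae (hUm : Measurable U) (hU : Measure.map U Q = volume.restrict (Icc (0:ℝ) 1)) :
    ∀ᵐ ω' ∂Q, U ω' ∈ Ioo (0:ℝ) 1 := by
  have hQ : Q (U ⁻¹' (Ioo (0:ℝ) 1)ᶜ) = 0 := by
    rw [← Measure.map_apply hUm measurableSet_Ioo.compl, hU,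
      Measure.restrict_apply measurableSet_Ioo.compl]
    have hset : (Ioo (0:ℝ) 1)ᶜ ∩ Icc 0 1 = {0, 1} := by
      ext r
      simp only [mem_inter_iff, mem_compl_iff, mem_Ioo, mem_Icc, mem_insert_iff,
        mem_singleton_iff]
      constructor
      · rintro ⟨h1, h2, h3⟩
        rcases lt_or_eq_of_le h2 with h | h
        · right
          rcases lt_or_eq_of_le h3 with h' | h'
          · exact absurd ⟨h, h'⟩ h1
          · exact h'
        · left; exact h.symm
      · rintro (rfl | rfl) <;> norm_num
    rw [hset]
    have : ({0, 1} : Set ℝ).Finite := (finite_singleton 1).insert 0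
    exact this.measure_zero _
  rw [ae_iff]
  convert hQ using 2
  rfl

lemma Q_event (hUm : Measurable U) (hU : Measure.map U Q = volume.restrict (Icc (0:ℝ) 1))
    (A : Set Ω') (B : Set ℝ) (hB : MeasurableSet B)
    (h : ∀ ω', U ω' ∈ Ioo (0:ℝ) 1 → (ω' ∈ A ↔ U ω' ∈ B)) :
    Q A = volume (B ∩ Icc (0:ℝ) 1) := by
  have hae := unif_ae hUm hU
  have hAE : A =ᵐ[Q] (U ⁻¹' B) := by
    filter_upwards [hae] with ω' hω'
    have := h ω' hω'
    simp only [eq_iff_iff]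
    exact this
  rw [measure_congr hAE, ← Measure.map_apply hUm hB, hU, Measure.restrict_apply hB]

end Uniform

section Expand

variable {Ω : Type*} [MeasurableSpace Ω] {m : Measure Ω} [IsProbabilityMeasure m]
variable {s : ℝ → ℝ → ℝ} {u v : ℕ → ℝ} {n : ℕ} {M : ℝ} {A B : Ω → ℝ}

lemma measurable_cnt (u : ℕ → ℝ) (n : ℕ) : Measurable (fun x => cnt u n x) := by
  have h : (fun x => cnt u n x) = fun x => ∑ i ∈ Finset.range n, if u i < x then 1 else 0 := by
    funext x; unfold cnt; rw [Finset.card_filter]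
  rw [h]
  exact Finset.measurable_sum _ fun i _ =>
    Measurable.ite (measurableSet_Ioi (a := u i)) measurable_const measurable_const

lemma measurable_sect (hsm : Measurable (fun p : ℝ × ℝ => s p.1 p.2)) (c : ℝ) :
    Measurable (fun x => s x c) :=
  hsm.comp (measurable_id.prodMk measurable_const)

lemma measurable_sect' (hsm : Measurable (fun p : ℝ × ℝ => s p.1 p.2)) (c : ℝ) :
    Measurable (fun y => s c y) :=
  hsm.comp (measurable_const.prodMk measurable_id)

lemma measurable_m1 (hsm : Measurable (fun p : ℝ × ℝ => s p.1 p.2)) :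
    Measurable (m1 s u v n) := by
  unfold m1
  have h1 : Measurable (fun x => s (u (cnt u n x)) (v 0)) :=
    (measurable_from_nat (f := fun k => s (u k) (v 0))).comp (measurable_cnt u n)
  have h2 : Measurable (fun x => s x (v n)) := measurable_sect hsm (v n)
  have h3 : Measurable (fun x => s (u (cnt u n x)) (v n)) :=
    (measurable_from_nat (f := fun k => s (u k) (v n))).comp (measurable_cnt u n)
  exact (h1.add h2).sub h3

lemma m1_bdd (hM : ∀ x y, |s x y| ≤ M) (x : ℝ) : |m1 s u v n x| ≤ 3 * M := by
  unfold m1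
  have b1 := abs_le.mp (hM (u (cnt u n x)) (v 0))
  have b2 := abs_le.mp (hM x (v n))
  have b3 := abs_le.mp (hM (u (cnt u n x)) (v n))
  rw [abs_le]
  constructor <;> linarith

lemma m2_bdd (hM : ∀ x y, |s x y| ≤ M) (y : ℝ) : |m2 s u v n y| ≤ M := hM (u 0) y

lemma measurableSet_joint (hA : Measurable A) (hB : Measurable B) (a b : ℝ) :
    MeasurableSet {ω | a < A ω ∧ b < B ω} :=
  (hA (measurableSet_Ioi (a := a))).inter (hB (measurableSet_Ioi (a := b)))

lemma DD_comp_eq (i j : ℕ) :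
    (fun ω => (if u i < A ω then (1:ℝ) else 0) * (if v j < B ω then (1:ℝ) else 0) *
        dd s (u i) (u (i+1)) (v j) (v (j+1)))
    = Set.indicator {ω | u i < A ω ∧ v j < B ω}
        (fun _ => dd s (u i) (u (i+1)) (v j) (v (j+1))) := by
  funext ω
  by_cases h1 : u i < A ω <;> by_cases h2 : v j < B ω <;>
    simp [Set.indicator_apply, h1, h2]

lemma DD_comp_rw : (fun ω => DD s u v n (A ω) (B ω))
    = fun ω => ∑ i ∈ Finset.range n, ∑ j ∈ Finset.range n,
        Set.indicator {ω' | u i < A ω' ∧ v j < B ω'}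
          (fun _ => dd s (u i) (u (i+1)) (v j) (v (j+1))) ω := by
  funext ω
  unfold DD
  refine Finset.sum_congr rfl fun i _ => Finset.sum_congr rfl fun j _ => ?_
  exact congrFun (DD_comp_eq i j) ω

lemma integrable_DD (hA : Measurable A) (hB : Measurable B) :
    Integrable (fun ω => DD s u v n (A ω) (B ω)) m := by
  rw [DD_comp_rw]
  exact integrable_finset_sum _ fun i _ => integrable_finset_sum _ fun j _ =>
    (integrable_const _).indicator (measurableSet_joint hA hB _ _)

lemma integral_DD (hA : Measurable A) (hB : Measurable B) :
    ∫ ω, DD s u v n (A ω) (B ω) ∂m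
      = ∑ i ∈ Finset.range n, ∑ j ∈ Finset.range n,
          (m {ω | u i < A ω ∧ v j < B ω}).toReal * dd s (u i) (u (i+1)) (v j) (v (j+1)) := by
  rw [DD_comp_rw, integral_finset_sum _ (fun i _ => integrable_finset_sum _ fun j _ =>
    (integrable_const _).indicator (measurableSet_joint hA hB _ _))]
  refine Finset.sum_congr rfl fun i _ => ?_
  rw [integral_finset_sum _ (fun j _ => (integrable_const _).indicator
    (measurableSet_joint hA hB _ _))]
  refine Finset.sum_congr rfl fun j _ => ?_
  rw [integral_indicator_const _ (measurableSet_joint hA hB _ _)]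
  simp [mul_comm, measureReal_def]

lemma integrable_m1A [IsFiniteMeasure m] (hsm : Measurable (fun p : ℝ × ℝ => s p.1 p.2))
    (hM : ∀ x y, |s x y| ≤ M) (hA : Measurable A) :
    Integrable (fun ω => m1 s u v n (A ω)) m :=
  integrable_bdd ((measurable_m1 hsm).comp hA) (fun ω => m1_bdd hM (A ω))

lemma integrable_m2B [IsFiniteMeasure m] (hsm : Measurable (fun p : ℝ × ℝ => s p.1 p.2))
    (hM : ∀ x y, |s x y| ≤ M) (hB : Measurable B) :
    Integrable (fun ω => m2 s u v n (B ω)) m :=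
  integrable_bdd ((measurable_sect' hsm (u 0)).comp hB) (fun ω => m2_bdd hM (B ω))

lemma integrable_psi (hsm : Measurable (fun p : ℝ × ℝ => s p.1 p.2))
    (hM : ∀ x y, |s x y| ≤ M) (hA : Measurable A) (hB : Measurable B) :
    Integrable (fun ω => psi s u v n (A ω) (B ω)) m := by
  have : (fun ω => psi s u v n (A ω) (B ω))
      = fun ω => (m1 s u v n (A ω) + m2 s u v n (B ω) - s (u 0) (v 0))
          + DD s u v n (A ω) (B ω) := rfl
  rw [this]
  exact (((integrable_m1A hsm hM hA).add (integrable_m2B hsm hM hB)).sub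
    (integrable_const _)).add (integrable_DD hA hB)

lemma integral_psi_expand (hsm : Measurable (fun p : ℝ × ℝ => s p.1 p.2))
    (hM : ∀ x y, |s x y| ≤ M) (hA : Measurable A) (hB : Measurable B) :
    ∫ ω, psi s u v n (A ω) (B ω) ∂m
      = (∫ ω, m1 s u v n (A ω) ∂m) + (∫ ω, m2 s u v n (B ω) ∂m) - s (u 0) (v 0)
        + ∑ i ∈ Finset.range n, ∑ j ∈ Finset.range n,
            (m {ω | u i < A ω ∧ v j < B ω}).toReal * dd s (u i) (u (i+1)) (v j) (v (j+1)) := by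
  have hrw : (fun ω => psi s u v n (A ω) (B ω))
      = fun ω => (m1 s u v n (A ω) + m2 s u v n (B ω) - s (u 0) (v 0))
          + DD s u v n (A ω) (B ω) := rfl
  have I1 : Integrable (fun ω => m1 s u v n (A ω)) m := integrable_m1A hsm hM hA
  have I2 : Integrable (fun ω => m2 s u v n (B ω)) m := integrable_m2B hsm hM hB
  have I3 : Integrable (fun ω => m1 s u v n (A ω) + m2 s u v n (B ω)) m := I1.add I2
  have I4 : Integrable (fun ω => m1 s u v n (A ω) + m2 s u v n (B ω) - s (u 0) (v 0)) m :=
    I3.sub (integrable_const _)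
  have I5 : Integrable (fun ω => DD s u v n (A ω) (B ω)) m := integrable_DD hA hB
  have h1 : ∫ ω, ((fun ω => m1 s u v n (A ω) + m2 s u v n (B ω) - s (u 0) (v 0)) ω
      + (fun ω => DD s u v n (A ω) (B ω)) ω) ∂m
      = (∫ ω, m1 s u v n (A ω) + m2 s u v n (B ω) - s (u 0) (v 0) ∂m)
        + ∫ ω, DD s u v n (A ω) (B ω) ∂m := integral_add I4 I5
  have h2 : ∫ ω, ((fun ω => m1 s u v n (A ω) + m2 s u v n (B ω)) ω
      - (fun _ => s (u 0) (v 0)) ω) ∂m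
      = (∫ ω, m1 s u v n (A ω) + m2 s u v n (B ω) ∂m) - ∫ _, s (u 0) (v 0) ∂m :=
    integral_sub I3 (integrable_const _)
  have h3 : ∫ ω, ((fun ω => m1 s u v n (A ω)) ω + (fun ω => m2 s u v n (B ω)) ω) ∂m
      = (∫ ω, m1 s u v n (A ω) ∂m) + ∫ ω, m2 s u v n (B ω) ∂m := integral_add I1 I2
  have h4 : ∫ _, s (u 0) (v 0) ∂m = s (u 0) (v 0) := by
    simp [integral_const, measure_univ]
  rw [hrw, h1, h2, h3, h4, integral_DD hA hB]

lemma e1_comp_rw : (fun ω => e1 s u v n (A ω))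
    = fun ω => ∑ i ∈ Finset.range n,
        Set.indicator {ω' | A ω' ∈ Ioc (u i) (u (i+1))}
          (fun _ => dd s (u i) (u (i+1)) (v 0) (v n)) ω := by
  funext ω
  unfold e1
  refine Finset.sum_congr rfl fun i _ => ?_
  by_cases h : u i < A ω ∧ A ω ≤ u (i+1) <;> simp [Set.indicator_apply, mem_Ioc, h]

lemma measurableSet_IocA (hA : Measurable A) (a b : ℝ) :
    MeasurableSet {ω | A ω ∈ Ioc a b} := hA measurableSet_Ioc

lemma integrable_e1 (hA : Measurable A) : Integrable (fun ω => e1 s u v n (A ω)) m := by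
  rw [e1_comp_rw]
  exact integrable_finset_sum _ fun i _ =>
    (integrable_const _).indicator (measurableSet_IocA hA _ _)

lemma integral_e1 (hA : Measurable A) :
    ∫ ω, e1 s u v n (A ω) ∂m
      = ∑ i ∈ Finset.range n,
          (m {ω | A ω ∈ Ioc (u i) (u (i+1))}).toReal * dd s (u i) (u (i+1)) (v 0) (v n) := by
  rw [e1_comp_rw, integral_finset_sum _ (fun i _ =>
    (integrable_const _).indicator (measurableSet_IocA hA _ _))]
  refine Finset.sum_congr rfl fun i _ => ?_
  rw [integral_indicator_const _ (measurableSet_IocA hA _ _)]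
  simp [mul_comm, measureReal_def]

lemma e2_comp_rw : (fun ω => e2 s u v n (B ω))
    = fun ω => ∑ j ∈ Finset.range n,
        Set.indicator {ω' | B ω' ∈ Ioc (v j) (v (j+1))}
          (fun _ => dd s (u 0) (u n) (v j) (v (j+1))) ω := by
  funext ω
  unfold e2
  refine Finset.sum_congr rfl fun j _ => ?_
  by_cases h : v j < B ω ∧ B ω ≤ v (j+1) <;> simp [Set.indicator_apply, mem_Ioc, h]

lemma integrable_e2 (hB : Measurable B) : Integrable (fun ω => e2 s u v n (B ω)) m := by
  rw [e2_comp_rw]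
  exact integrable_finset_sum _ fun j _ =>
    (integrable_const _).indicator (measurableSet_IocA hB _ _)

lemma integral_e2 (hB : Measurable B) :
    ∫ ω, e2 s u v n (B ω) ∂m
      = ∑ j ∈ Finset.range n,
          (m {ω | B ω ∈ Ioc (v j) (v (j+1))}).toReal * dd s (u 0) (u n) (v j) (v (j+1)) := by
  rw [e2_comp_rw, integral_finset_sum _ (fun j _ =>
    (integrable_const _).indicator (measurableSet_IocA hB _ _))]
  refine Finset.sum_congr rfl fun j _ => ?_
  rw [integral_indicator_const _ (measurableSet_IocA hB _ _)]
  simp [mul_comm, measureReal_def]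

lemma tl_comp_rw : (fun ω => tl u n (A ω))
    = fun ω => Set.indicator {ω' | A ω' ∈ Ioc (u 0) (u n)}ᶜ (fun _ => (1:ℝ)) ω := by
  funext ω
  unfold tl
  by_cases h : u 0 < A ω ∧ A ω ≤ u n <;>
    simp [Set.indicator_apply, mem_Ioc, h]

lemma integrable_tl (hA : Measurable A) : Integrable (fun ω => tl u n (A ω)) m := by
  rw [tl_comp_rw]
  exact (integrable_const _).indicator (measurableSet_IocA hA _ _).compl

lemma integral_tl (hA : Measurable A) :
    ∫ ω, tl u n (A ω) ∂m = (m {ω | A ω ∈ Ioc (u 0) (u n)}ᶜ).toReal := by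
  rw [tl_comp_rw, integral_indicator_const _ (measurableSet_IocA hA _ _).compl]
  simp [measureReal_def]

end Expand

section Combo

variable {Ω : Type*} [MeasurableSpace Ω] {m : Measure Ω} [IsProbabilityMeasure m]
variable {s : ℝ → ℝ → ℝ} {u v : ℕ → ℝ} {n : ℕ} {M : ℝ} {A B : Ω → ℝ}

lemma dd_le_4M (hM : ∀ x y, |s x y| ≤ M) (a b c d : ℝ) : dd s a b c d ≤ 4 * M := by
  have b1 := abs_le.mp (hM b d)
  have b2 := abs_le.mp (hM a d)
  have b3 := abs_le.mp (hM b c)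
  have b4 := abs_le.mp (hM a c)
  unfold dd
  linarith

lemma integrable_s_comp (hsm : Measurable (fun p : ℝ × ℝ => s p.1 p.2))
    (hM : ∀ x y, |s x y| ≤ M) (hA : Measurable A) (hB : Measurable B) :
    Integrable (fun ω => s (A ω) (B ω)) m :=
  integrable_bdd (hsm.comp (hA.prodMk hB)) (C := M) (fun ω => hM _ _)

lemma integral_comboU (hsm : Measurable (fun p : ℝ × ℝ => s p.1 p.2))
    (hM : ∀ x y, |s x y| ≤ M) (hA : Measurable A) (hB : Measurable B) (c : ℝ) :
    ∫ ω, (psi s u v n (A ω) (B ω) + e1 s u v n (A ω)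
        + c * (tl u n (A ω) + tl v n (B ω))) ∂m
      = (∫ ω, psi s u v n (A ω) (B ω) ∂m) + (∫ ω, e1 s u v n (A ω) ∂m)
        + c * ((∫ ω, tl u n (A ω) ∂m) + (∫ ω, tl v n (B ω) ∂m)) := by
  have I1 : Integrable (fun ω => psi s u v n (A ω) (B ω)) m := integrable_psi hsm hM hA hB
  have I2 : Integrable (fun ω => e1 s u v n (A ω)) m := integrable_e1 hA
  have I3 : Integrable (fun ω => tl u n (A ω) + tl v n (B ω)) m :=
    (integrable_tl hA).add (integrable_tl hB)
  have h1 : ∫ ω, ((fun ω => psi s u v n (A ω) (B ω) + e1 s u v n (A ω)) ω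
      + (fun ω => c * (tl u n (A ω) + tl v n (B ω))) ω) ∂m
      = (∫ ω, psi s u v n (A ω) (B ω) + e1 s u v n (A ω) ∂m)
        + ∫ ω, c * (tl u n (A ω) + tl v n (B ω)) ∂m :=
    integral_add (I1.add I2) (I3.const_mul c)
  have h2 : ∫ ω, ((fun ω => psi s u v n (A ω) (B ω)) ω + (fun ω => e1 s u v n (A ω)) ω) ∂m
      = (∫ ω, psi s u v n (A ω) (B ω) ∂m) + ∫ ω, e1 s u v n (A ω) ∂m := integral_add I1 I2
  have h3 : ∫ ω, c * (tl u n (A ω) + tl v n (B ω)) ∂m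
      = c * ∫ ω, (tl u n (A ω) + tl v n (B ω)) ∂m := integral_const_mul c _
  have h4 : ∫ ω, ((fun ω => tl u n (A ω)) ω + (fun ω => tl v n (B ω)) ω) ∂m
      = (∫ ω, tl u n (A ω) ∂m) + ∫ ω, tl v n (B ω) ∂m :=
    integral_add (integrable_tl hA) (integrable_tl hB)
  rw [h1, h2, h3, h4]

lemma integral_comboL (hsm : Measurable (fun p : ℝ × ℝ => s p.1 p.2))
    (hM : ∀ x y, |s x y| ≤ M) (hA : Measurable A) (hB : Measurable B) (c : ℝ) :
    ∫ ω, (psi s u v n (A ω) (B ω) - e2 s u v n (B ω)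
        - c * (tl u n (A ω) + tl v n (B ω))) ∂m
      = (∫ ω, psi s u v n (A ω) (B ω) ∂m) - (∫ ω, e2 s u v n (B ω) ∂m)
        - c * ((∫ ω, tl u n (A ω) ∂m) + (∫ ω, tl v n (B ω) ∂m)) := by
  have I1 : Integrable (fun ω => psi s u v n (A ω) (B ω)) m := integrable_psi hsm hM hA hB
  have I2 : Integrable (fun ω => e2 s u v n (B ω)) m := integrable_e2 hB
  have I3 : Integrable (fun ω => tl u n (A ω) + tl v n (B ω)) m :=
    (integrable_tl hA).add (integrable_tl hB)
  have h1 : ∫ ω, ((fun ω => psi s u v n (A ω) (B ω) - e2 s u v n (B ω)) ω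
      - (fun ω => c * (tl u n (A ω) + tl v n (B ω))) ω) ∂m
      = (∫ ω, psi s u v n (A ω) (B ω) - e2 s u v n (B ω) ∂m)
        - ∫ ω, c * (tl u n (A ω) + tl v n (B ω)) ∂m :=
    integral_sub (I1.sub I2) (I3.const_mul c)
  have h2 : ∫ ω, ((fun ω => psi s u v n (A ω) (B ω)) ω - (fun ω => e2 s u v n (B ω)) ω) ∂m
      = (∫ ω, psi s u v n (A ω) (B ω) ∂m) - ∫ ω, e2 s u v n (B ω) ∂m := integral_sub I1 I2
  have h3 : ∫ ω, c * (tl u n (A ω) + tl v n (B ω)) ∂m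
      = c * ∫ ω, (tl u n (A ω) + tl v n (B ω)) ∂m := integral_const_mul c _
  have h4 : ∫ ω, ((fun ω => tl u n (A ω)) ω + (fun ω => tl v n (B ω)) ω) ∂m
      = (∫ ω, tl u n (A ω) ∂m) + ∫ ω, tl v n (B ω) ∂m :=
    integral_add (integrable_tl hA) (integrable_tl hB)
  rw [h1, h2, h3, h4]

lemma integrable_comboU (hsm : Measurable (fun p : ℝ × ℝ => s p.1 p.2))
    (hM : ∀ x y, |s x y| ≤ M) (hA : Measurable A) (hB : Measurable B) (c : ℝ) :
    Integrable (fun ω => psi s u v n (A ω) (B ω) + e1 s u v n (A ω)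
        + c * (tl u n (A ω) + tl v n (B ω))) m :=
  ((integrable_psi hsm hM hA hB).add (integrable_e1 hA)).add
    (((integrable_tl hA).add (integrable_tl hB)).const_mul c)

lemma integrable_comboL (hsm : Measurable (fun p : ℝ × ℝ => s p.1 p.2))
    (hM : ∀ x y, |s x y| ≤ M) (hA : Measurable A) (hB : Measurable B) (c : ℝ) :
    Integrable (fun ω => psi s u v n (A ω) (B ω) - e2 s u v n (B ω)
        - c * (tl u n (A ω) + tl v n (B ω))) m :=
  ((integrable_psi hsm hM hA hB).sub (integrable_e2 hB)).sub
    (((integrable_tl hA).add (integrable_tl hB)).const_mul c)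

end Combo

end
end SupermodAux
open SupermodAux

/-- The countermonotonic coupling minimizes the expectation of a bounded measurable
supermodular function over all couplings with fixed margins (Puccetti–Scarsini,
Theorem 3.1): E[s(X,Y)] ≥ E[s(F⁻¹(U), G⁻¹(1−U))] for U uniform on [0,1]. -/
theorem supermodular_countermonotone_min {Ω Ω' : Type*} [MeasurableSpace Ω] [MeasurableSpace Ω']
    (P : Measure Ω) [IsProbabilityMeasure P] (Q : Measure Ω') [IsProbabilityMeasure Q]
    (s : ℝ → ℝ → ℝ)
    (hsm : Measurable (fun p : ℝ × ℝ => s p.1 p.2))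
    (hsb : ∃ M : ℝ, ∀ x y : ℝ, |s x y| ≤ M)
    (hsuper : ∀ x₁ x₂ y₁ y₂ : ℝ, x₁ ≤ x₂ → y₁ ≤ y₂ →
      s x₁ y₂ + s x₂ y₁ ≤ s x₁ y₁ + s x₂ y₂)
    (X Y : Ω → ℝ) (hXm : Measurable X) (hYm : Measurable Y)
    (F G : ℝ → ℝ) (hFc : Continuous F) (hFs : StrictMono F)
    (hGc : Continuous G) (hGs : StrictMono G)
    (hF : ∀ x, F x = (P.map X (Iic x)).toReal)
    (hG : ∀ y, G y = (P.map Y (Iic y)).toReal)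
    (U : Ω' → ℝ) (hUm : Measurable U)
    (hU : Measure.map U Q = volume.restrict (Icc (0:ℝ) 1)) :
    ∫ ω', s (Function.invFun F (U ω')) (Function.invFun G (1 - U ω')) ∂Q ≤
      ∫ ω, s (X ω) (Y ω) ∂P := by
  classical
  obtain ⟨M, hM⟩ := hsb
  have hM0 : 0 ≤ M := le_trans (abs_nonneg _) (hM 0 0)
  haveI hPX : IsProbabilityMeasure (P.map X) := Measure.isProbabilityMeasure_map hXm.aemeasurable
  haveI hPY : IsProbabilityMeasure (P.map Y) := Measure.isProbabilityMeasure_map hYm.aemeasurable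
  have hrF : range F = Ioo 0 1 := range_cdf hFc hFs hF
  have hrG : range G = Ioo 0 1 := range_cdf hGc hGs hG
  have hsurjF : Ioo (0:ℝ) 1 ⊆ range F := hrF.ge
  have hsurjG : Ioo (0:ℝ) 1 ⊆ range G := hrG.ge
  have h01F : ∀ x, F x ∈ Ioo (0:ℝ) 1 := fun x => hrF ▸ mem_range_self x
  have h01G : ∀ y, G y ∈ Ioo (0:ℝ) 1 := fun y => hrG ▸ mem_range_self y
  have hX'm : Measurable (fun ω' => Function.invFun F (U ω')) :=
    (measurable_invFun hFs hrF).comp hUm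
  have hY'm : Measurable (fun ω' => Function.invFun G (1 - U ω')) :=
    (measurable_invFun hGs hrG).comp (measurable_const.sub hUm)
  have hPIic : ∀ a, P (X ⁻¹' Iic a) = ENNReal.ofReal (F a) := by
    intro a
    rw [← Measure.map_apply hXm measurableSet_Iic, hF a,
      ENNReal.ofReal_toReal (measure_ne_top _ _)]
  have hPIicY : ∀ a, P (Y ⁻¹' Iic a) = ENNReal.ofReal (G a) := by
    intro a
    rw [← Measure.map_apply hYm measurableSet_Iic, hG a,
      ENNReal.ofReal_toReal (measure_ne_top _ _)]
  have hlawX : Q.map (fun ω' => Function.invFun F (U ω')) = P.map X := by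
    haveI : IsProbabilityMeasure (Q.map (fun ω' => Function.invFun F (U ω'))) :=
      Measure.isProbabilityMeasure_map hX'm.aemeasurable
    refine Measure.ext_of_Iic _ _ fun a => ?_
    rw [Measure.map_apply hX'm measurableSet_Iic, Measure.map_apply hXm measurableSet_Iic,
      hPIic a]
    have hQa : Q ((fun ω' => Function.invFun F (U ω')) ⁻¹' Iic a)
        = volume (Iic (F a) ∩ Icc 0 1) := by
      apply Q_event hUm hU _ _ measurableSet_Iic
      intro ω' hω'
      simp only [mem_preimage, mem_Iic]
      exact invFun_le_iff hFs hsurjF hω'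
    rw [hQa]
    have hset : Iic (F a) ∩ Icc (0:ℝ) 1 = Icc 0 (F a) := by
      ext r
      simp only [mem_inter_iff, mem_Iic, mem_Icc]
      constructor
      · rintro ⟨h1, h2, h3⟩; exact ⟨h2, h1⟩
      · rintro ⟨h1, h2⟩; exact ⟨h2, h1, h2.trans (le_of_lt (h01F a).2)⟩
    rw [hset, Real.volume_Icc]
    norm_num
  have hlawY : Q.map (fun ω' => Function.invFun G (1 - U ω')) = P.map Y := by
    haveI : IsProbabilityMeasure (Q.map (fun ω' => Function.invFun G (1 - U ω'))) :=
      Measure.isProbabilityMeasure_map hY'm.aemeasurable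
    refine Measure.ext_of_Iic _ _ fun a => ?_
    rw [Measure.map_apply hY'm measurableSet_Iic, Measure.map_apply hYm measurableSet_Iic,
      hPIicY a]
    have hQa : Q ((fun ω' => Function.invFun G (1 - U ω')) ⁻¹' Iic a)
        = volume (Ici (1 - G a) ∩ Icc 0 1) := by
      apply Q_event hUm hU _ _ measurableSet_Ici
      intro ω' hω'
      have h1U : (1 - U ω') ∈ Ioo (0:ℝ) 1 := ⟨by linarith [hω'.2], by linarith [hω'.1]⟩
      simp only [mem_preimage, mem_Iic, mem_Ici]
      constructor
      · intro h
        have := (invFun_le_iff hGs hsurjG h1U).mp h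
        linarith
      · intro h
        exact (invFun_le_iff hGs hsurjG h1U).mpr (by linarith)
    rw [hQa]
    have hset : Ici (1 - G a) ∩ Icc (0:ℝ) 1 = Icc (1 - G a) 1 := by
      ext r
      simp only [mem_inter_iff, mem_Ici, mem_Icc]
      constructor
      · rintro ⟨h1, h2, h3⟩; exact ⟨h1, h3⟩
      · rintro ⟨h1, h2⟩
        refine ⟨h1, ?_, h2⟩
        have := (h01G a).2
        linarith
    rw [hset, Real.volume_Icc]
    norm_num
  have key : ∀ n : ℕ,
      (∫ ω', s (Function.invFun F (U ω')) (Function.invFun G (1 - U ω')) ∂Q)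
        ≤ (∫ ω, s (X ω) (Y ω) ∂P) + 72 * M / ((n:ℝ) + 2) := by
    intro n
    set N : ℝ := (n:ℝ) + 2 with hNdef
    have hN : (0:ℝ) < N := by rw [hNdef]; positivity
    set t : ℕ → ℝ := fun i => ((i:ℝ) + 1) / N with htdef
    have ht : ∀ i, i ≤ n → t i ∈ Ioo (0:ℝ) 1 := by
      intro i hi
      constructor
      · show (0:ℝ) < ((i:ℝ) + 1) / N
        positivity
      · show ((i:ℝ) + 1) / N < 1
        rw [div_lt_one hN, hNdef]
        have : (i:ℝ) ≤ (n:ℝ) := Nat.cast_le.mpr hi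
        linarith
    have htmono : ∀ i j : ℕ, i ≤ j → t i ≤ t j := by
      intro i j hij
      have h : (i:ℝ) ≤ (j:ℝ) := Nat.cast_le.mpr hij
      show ((i:ℝ) + 1) / N ≤ ((j:ℝ) + 1) / N
      gcongr
    set u : ℕ → ℝ := fun i => Function.invFun F (t i) with hudef
    set v : ℕ → ℝ := fun i => Function.invFun G (t i) with hvdef
    have hFu : ∀ i, i ≤ n → F (u i) = t i := fun i hi => invFun_spec hFs hsurjF (ht i hi)
    have hGv : ∀ i, i ≤ n → G (v i) = t i := fun i hi => invFun_spec hGs hsurjG (ht i hi)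
    have hu : ∀ i j, i ≤ j → j ≤ n → u i ≤ u j := by
      intro i j hij hj
      refine hFs.le_iff_le.mp ?_
      rw [hFu i (hij.trans hj), hFu j hj]
      exact htmono i j hij
    have hv : ∀ i j, i ≤ j → j ≤ n → v i ≤ v j := by
      intro i j hij hj
      refine hGs.le_iff_le.mp ?_
      rw [hGv i (hij.trans hj), hGv j hj]
      exact htmono i j hij
    have hPXIic : ∀ a, (P (X ⁻¹' Iic a)).toReal = F a := fun a => by
      rw [hPIic a, ENNReal.toReal_ofReal (le_of_lt (h01F a).1)]
    have hPYIic : ∀ a, (P (Y ⁻¹' Iic a)).toReal = G a := fun a => by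
      rw [hPIicY a, ENNReal.toReal_ofReal (le_of_lt (h01G a).1)]
    have hPXi : ∀ i, i ≤ n → (P {ω | u i < X ω}).toReal = 1 - t i := by
      intro i hi
      have hset : {ω | u i < X ω} = (X ⁻¹' Iic (u i))ᶜ := by
        ext ω; simp [not_le]
      rw [hset, prob_compl_toReal (hXm measurableSet_Iic), hPXIic, hFu i hi]
    have hPYj : ∀ j, j ≤ n → (P {ω | v j < Y ω}).toReal = 1 - t j := by
      intro j hj
      have hset : {ω | v j < Y ω} = (Y ⁻¹' Iic (v j))ᶜ := by
        ext ω; simp [not_le]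
      rw [hset, prob_compl_toReal (hYm measurableSet_Iic), hPYIic, hGv j hj]
    have hPcellX : ∀ i, i < n → (P {ω | X ω ∈ Ioc (u i) (u (i+1))}).toReal = 1 / N := by
      intro i hi
      rw [prob_Ioc_toReal hXm (hu i (i+1) (by omega) (by omega)), hPXIic, hPXIic,
        hFu (i+1) (by omega), hFu i (by omega)]
      show ((((i:ℕ)+1:ℕ):ℝ) + 1) / N - ((i:ℝ) + 1) / N = 1 / N
      push_cast
      ring
    have hPcellY : ∀ j, j < n → (P {ω | Y ω ∈ Ioc (v j) (v (j+1))}).toReal = 1 / N := by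
      intro j hj
      rw [prob_Ioc_toReal hYm (hv j (j+1) (by omega) (by omega)), hPYIic, hPYIic,
        hGv (j+1) (by omega), hGv j (by omega)]
      show ((((j:ℕ)+1:ℕ):ℝ) + 1) / N - ((j:ℝ) + 1) / N = 1 / N
      push_cast
      ring
    have hPtailX : (P {ω | X ω ∈ Ioc (u 0) (u n)}ᶜ).toReal = 2 / N := by
      rw [prob_compl_toReal (A := {ω | X ω ∈ Ioc (u 0) (u n)}) (hXm measurableSet_Ioc),
        prob_Ioc_toReal hXm (hu 0 n (by omega) le_rfl), hPXIic, hPXIic,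
        hFu n le_rfl, hFu 0 (by omega)]
      show 1 - (((n:ℝ) + 1) / N - (((0:ℕ):ℝ) + 1) / N) = 2 / N
      rw [hNdef]
      push_cast
      field_simp
      ring
    have hPtailY : (P {ω | Y ω ∈ Ioc (v 0) (v n)}ᶜ).toReal = 2 / N := by
      rw [prob_compl_toReal (A := {ω | Y ω ∈ Ioc (v 0) (v n)}) (hYm measurableSet_Ioc),
        prob_Ioc_toReal hYm (hv 0 n (by omega) le_rfl), hPYIic, hPYIic,
        hGv n le_rfl, hGv 0 (by omega)]
      show 1 - (((n:ℝ) + 1) / N - (((0:ℕ):ℝ) + 1) / N) = 2 / N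
      rw [hNdef]
      push_cast
      field_simp
      ring
    have hQX : ∀ S : Set ℝ, MeasurableSet S →
        Q ((fun ω' => Function.invFun F (U ω')) ⁻¹' S) = P (X ⁻¹' S) := by
      intro S hS
      rw [← Measure.map_apply hX'm hS, hlawX, Measure.map_apply hXm hS]
    have hQY : ∀ S : Set ℝ, MeasurableSet S →
        Q ((fun ω' => Function.invFun G (1 - U ω')) ⁻¹' S) = P (Y ⁻¹' S) := by
      intro S hS
      rw [← Measure.map_apply hY'm hS, hlawY, Measure.map_apply hYm hS]
    have hcmp : ∀ i ∈ Finset.range n, ∀ j ∈ Finset.range n,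
        (Q {ω' | u i < Function.invFun F (U ω')
            ∧ v j < Function.invFun G (1 - U ω')}).toReal
          ≤ (P {ω | u i < X ω ∧ v j < Y ω}).toReal := by
      intro i hi j hj
      have hi' := Finset.mem_range.mp hi
      have hj' := Finset.mem_range.mp hj
      have hPlow : 1 - t i - t j ≤ (P {ω | u i < X ω ∧ v j < Y ω}).toReal := by
        have hseteq : {ω | u i < X ω ∧ v j < Y ω}
            = {ω | u i < X ω} ∩ {ω | v j < Y ω} := rfl
        have h := prob_inter_ge (m := P) (A := {ω | u i < X ω}) (B := {ω | v j < Y ω})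
          (hYm (measurableSet_Ioi (a := v j)))
        rw [hPXi i (le_of_lt hi'), hPYj j (le_of_lt hj')] at h
        rw [hseteq]
        calc 1 - t i - t j = 1 - t i + (1 - t j) - 1 := by ring
          _ ≤ _ := h
      have hQval : Q {ω' | u i < Function.invFun F (U ω')
            ∧ v j < Function.invFun G (1 - U ω')}
          = volume (Ioo (t i) (1 - t j) ∩ Icc 0 1) := by
        apply Q_event hUm hU _ _ measurableSet_Ioo
        intro ω' hω'
        have h1U : (1 - U ω') ∈ Ioo (0:ℝ) 1 := ⟨by linarith [hω'.2], by linarith [hω'.1]⟩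
        simp only [mem_setOf_eq, mem_Ioo]
        constructor
        · rintro ⟨ha, hb⟩
          constructor
          · have := (lt_invFun_iff hFs hsurjF hω').mp ha
            rwa [hFu i (le_of_lt hi')] at this
          · have := (lt_invFun_iff hGs hsurjG h1U).mp hb
            rw [hGv j (le_of_lt hj')] at this
            linarith
        · rintro ⟨ha, hb⟩
          constructor
          · exact (lt_invFun_iff hFs hsurjF hω').mpr (by rwa [hFu i (le_of_lt hi')])
          · exact (lt_invFun_iff hGs hsurjG h1U).mpr
              (by rw [hGv j (le_of_lt hj')]; linarith)
      rw [hQval]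
      have hsub : Ioo (t i) (1 - t j) ∩ Icc (0:ℝ) 1 = Ioo (t i) (1 - t j) := by
        apply inter_eq_self_of_subset_left
        intro r hr
        have h0 := (ht i (le_of_lt hi')).1
        have h1 := (ht j (le_of_lt hj')).1
        exact ⟨by linarith [hr.1], by linarith [hr.2]⟩
      rw [hsub, Real.volume_Ioo]
      rcases le_or_gt (1 - t j - t i) 0 with h | h
      · rw [show ENNReal.ofReal (1 - t j - t i) = 0 from ENNReal.ofReal_eq_zero.mpr h]
        simpa using ENNReal.toReal_nonneg
      · rw [ENNReal.toReal_ofReal (le_of_lt h)]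
        calc 1 - t j - t i = 1 - t i - t j := by ring
          _ ≤ _ := hPlow
    have hm2meas : Measurable (m2 s u v n) := measurable_sect' hsm (u 0)
    have hm1int : ∫ ω', m1 s u v n (Function.invFun F (U ω')) ∂Q
        = ∫ ω, m1 s u v n (X ω) ∂P := by
      rw [← integral_map hX'm.aemeasurable (measurable_m1 hsm).aestronglyMeasurable, hlawX,
        integral_map hXm.aemeasurable (measurable_m1 hsm).aestronglyMeasurable]
    have hm2int : ∫ ω', m2 s u v n (Function.invFun G (1 - U ω')) ∂Q
        = ∫ ω, m2 s u v n (Y ω) ∂P := by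
      rw [← integral_map hY'm.aemeasurable hm2meas.aestronglyMeasurable, hlawY,
        integral_map hYm.aemeasurable hm2meas.aestronglyMeasurable]
    have EP := integral_psi_expand (m := P) (u := u) (v := v) (n := n) hsm hM hXm hYm
    have EQ := integral_psi_expand (m := Q) (u := u) (v := v) (n := n) hsm hM hX'm hY'm
    have hpsicmp :
        (∫ ω', psi s u v n (Function.invFun F (U ω')) (Function.invFun G (1 - U ω')) ∂Q)
          ≤ ∫ ω, psi s u v n (X ω) (Y ω) ∂P := by
      rw [EP, EQ, hm1int, hm2int]
      have hsums : ∑ i ∈ Finset.range n, ∑ j ∈ Finset.range n,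
          (Q {ω' | u i < Function.invFun F (U ω')
              ∧ v j < Function.invFun G (1 - U ω')}).toReal
            * dd s (u i) (u (i+1)) (v j) (v (j+1))
          ≤ ∑ i ∈ Finset.range n, ∑ j ∈ Finset.range n,
            (P {ω | u i < X ω ∧ v j < Y ω}).toReal
              * dd s (u i) (u (i+1)) (v j) (v (j+1)) := by
        refine Finset.sum_le_sum fun i hi => Finset.sum_le_sum fun j hj => ?_
        have hi' := Finset.mem_range.mp hi
        have hj' := Finset.mem_range.mp hj
        exact mul_le_mul_of_nonneg_right (hcmp i hi j hj)
          (dd_nonneg hsuper (hu i (i+1) (by omega) (by omega))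
            (hv j (j+1) (by omega) (by omega)))
      linarith
    have intS_Q := integrable_s_comp (m := Q) hsm hM hX'm hY'm
    have intS_P := integrable_s_comp (m := P) hsm hM hXm hYm
    have hup : (∫ ω', s (Function.invFun F (U ω')) (Function.invFun G (1 - U ω')) ∂Q)
        ≤ (∫ ω', psi s u v n (Function.invFun F (U ω'))
              (Function.invFun G (1 - U ω')) ∂Q)
          + (∫ ω', e1 s u v n (Function.invFun F (U ω')) ∂Q)
          + 8 * M * ((∫ ω', tl u n (Function.invFun F (U ω')) ∂Q)
            + (∫ ω', tl v n (Function.invFun G (1 - U ω')) ∂Q)) := by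
      have h := integral_mono intS_Q (integrable_comboU hsm hM hX'm hY'm (8*M))
        (fun ω' => s_le_psi hsuper hM hu hv _ _)
      rwa [integral_comboU hsm hM hX'm hY'm (8*M)] at h
    have hlow : (∫ ω, psi s u v n (X ω) (Y ω) ∂P) - (∫ ω, e2 s u v n (Y ω) ∂P)
          - 8 * M * ((∫ ω, tl u n (X ω) ∂P) + (∫ ω, tl v n (Y ω) ∂P))
        ≤ ∫ ω, s (X ω) (Y ω) ∂P := by
      have h := integral_mono (integrable_comboL hsm hM hXm hYm (8*M)) intS_P
        (fun ω => s_ge_psi hsuper hM hu hv _ _)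
      rwa [integral_comboL hsm hM hXm hYm (8*M)] at h
    have hQcellX : ∀ i, i < n →
        (Q {ω' | Function.invFun F (U ω') ∈ Ioc (u i) (u (i+1))}).toReal = 1 / N := by
      intro i hi
      have hre : {ω' | Function.invFun F (U ω') ∈ Ioc (u i) (u (i+1))}
          = (fun ω' => Function.invFun F (U ω')) ⁻¹' (Ioc (u i) (u (i+1))) := rfl
      rw [hre, hQX _ measurableSet_Ioc]
      exact hPcellX i hi
    have hE1Q : (∫ ω', e1 s u v n (Function.invFun F (U ω')) ∂Q) ≤ 4 * M / N := by
      rw [integral_e1 (m := Q) hX'm]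
      calc ∑ i ∈ Finset.range n,
            (Q {ω' | Function.invFun F (U ω') ∈ Ioc (u i) (u (i+1))}).toReal
              * dd s (u i) (u (i+1)) (v 0) (v n)
          = ∑ i ∈ Finset.range n, (1/N) * dd s (u i) (u (i+1)) (v 0) (v n) := by
            refine Finset.sum_congr rfl fun i hi => ?_
            rw [hQcellX i (Finset.mem_range.mp hi)]
        _ = (1/N) * ∑ i ∈ Finset.range n, dd s (u i) (u (i+1)) (v 0) (v n) := by
            rw [Finset.mul_sum]
        _ = (1/N) * dd s (u 0) (u n) (v 0) (v n) := by rw [dd_sum_left]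
        _ ≤ (1/N) * (4 * M) :=
            mul_le_mul_of_nonneg_left (dd_le_4M hM _ _ _ _) (by positivity)
        _ = 4 * M / N := by ring
    have hE2P : (∫ ω, e2 s u v n (Y ω) ∂P) ≤ 4 * M / N := by
      rw [integral_e2 (m := P) hYm]
      calc ∑ j ∈ Finset.range n,
            (P {ω | Y ω ∈ Ioc (v j) (v (j+1))}).toReal * dd s (u 0) (u n) (v j) (v (j+1))
          = ∑ j ∈ Finset.range n, (1/N) * dd s (u 0) (u n) (v j) (v (j+1)) := by
            refine Finset.sum_congr rfl fun j hj => ?_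
            rw [hPcellY j (Finset.mem_range.mp hj)]
        _ = (1/N) * ∑ j ∈ Finset.range n, dd s (u 0) (u n) (v j) (v (j+1)) := by
            rw [Finset.mul_sum]
        _ = (1/N) * dd s (u 0) (u n) (v 0) (v n) := by rw [dd_sum_right]
        _ ≤ (1/N) * (4 * M) :=
            mul_le_mul_of_nonneg_left (dd_le_4M hM _ _ _ _) (by positivity)
        _ = 4 * M / N := by ring
    have hTXQ : (∫ ω', tl u n (Function.invFun F (U ω')) ∂Q) = 2 / N := by
      rw [integral_tl hX'm]
      have hre : {ω' | Function.invFun F (U ω') ∈ Ioc (u 0) (u n)}ᶜ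
          = (fun ω' => Function.invFun F (U ω')) ⁻¹' (Ioc (u 0) (u n))ᶜ := rfl
      rw [hre, hQX _ measurableSet_Ioc.compl]
      exact hPtailX
    have hTYQ : (∫ ω', tl v n (Function.invFun G (1 - U ω')) ∂Q) = 2 / N := by
      rw [integral_tl hY'm]
      have hre : {ω' | Function.invFun G (1 - U ω') ∈ Ioc (v 0) (v n)}ᶜ
          = (fun ω' => Function.invFun G (1 - U ω')) ⁻¹' (Ioc (v 0) (v n))ᶜ := rfl
      rw [hre, hQY _ measurableSet_Ioc.compl]
      exact hPtailY
    have hTXP : (∫ ω, tl u n (X ω) ∂P) = 2 / N := by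
      rw [integral_tl hXm]; exact hPtailX
    have hTYP : (∫ ω, tl v n (Y ω) ∂P) = 2 / N := by
      rw [integral_tl hYm]; exact hPtailY
    rw [hTXQ, hTYQ] at hup
    rw [hTXP, hTYP] at hlow
    have harith1 : 8 * M * (2/N + 2/N) = 32 * M / N := by ring
    rw [harith1] at hup hlow
    have hfin : 4 * M / N + 32 * M / N + 4 * M / N + 32 * M / N = 72 * M / N := by ring
    linarith
  refine le_of_forall_pos_le_add fun ε hε => ?_
  obtain ⟨n, hn⟩ := exists_nat_gt (72 * M / ε)
  have h1 : 72 * M / ((n:ℝ) + 2) ≤ ε := by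
    rw [div_le_iff₀ (by positivity)]
    rw [div_lt_iff₀ hε] at hn
    nlinarith [hε.le]
  exact (key n).trans (by linarith)
end
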